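/- If x = (x₁, x̄) ∈ ℝ^N satisfies g_ε(x̄) < x₁ and |x| < 1 (i.e. x ∈ 𝑇̃Ω_β(ε)), then |x| > ε sin β / √(2(1 − cos β)). -/

import Mathlib

open Real

set_option maxHeartbeats 1000000 in
lemma norm_lower_bound_aux (ε s c sb cb x₀ b n : ℝ)
    (hε0 : 0 < ε) (hs : 0 < s) (hc : 0 < c) (hsc : s ^ 2 + c ^ 2 = 1)
    (hsb : sb = 2 * s * c) (hcb : cb = 2 * c ^ 2 - 1) (hsb0 : 0 < sb)
    (hb0 : 0 ≤ b) (hbsq : b ^ 2 = n ^ 2 - x₀ ^ 2) (hn0 : 0 ≤ n)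
    (hx : (if b ≤ ε * sb then ε - b * (s / c) else b * (cb / sb)) < x₀) :
    ε * c < n := by
  split_ifs at hx with hcase
  · -- near-tip region
    have hx' : ε * c < c * x₀ + s * b := by
      have := mul_lt_mul_of_pos_left hx hc
      field_simp at this
      nlinarith [this]
    have hA : (c * x₀ + s * b) ^ 2 ≤ n ^ 2 := by
      nlinarith [sq_nonneg (c * b - s * x₀)]
    have hB : (ε * c) ^ 2 < n ^ 2 :=
      lt_of_lt_of_le (by nlinarith [mul_pos hε0 hc]) hA
    nlinarith [mul_pos hε0 hc]
  · have hb' : ε * sb < b := lt_of_not_ge hcase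
    have hx' : b * cb < x₀ * sb := by
      rw [← mul_div_assoc] at hx
      exact (div_lt_iff₀ hsb0).mp hx
    rcases le_or_gt cb 0 with hcos | hcos
    · -- cb ≤ 0 : then n ≥ b > ε sb ≥ ε c
      have hnb : b ≤ n := by nlinarith [sq_nonneg x₀]
      have h2s : 1 < 2 * s := by nlinarith
      have : ε * c < ε * sb := by
        rw [hsb]; nlinarith [mul_pos hε0 hc]
      linarith
    · -- cb > 0 : then ε < n
      have hx0pos : 0 < x₀ * sb := lt_of_le_of_lt (by positivity) hx'
      have hsq : b ^ 2 * cb ^ 2 < x₀ ^ 2 * sb ^ 2 := by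
        nlinarith [mul_nonneg hb0 hcos.le]
      have hb2 : ε ^ 2 * sb ^ 2 < b ^ 2 := by
        nlinarith [mul_nonneg hε0.le hsb0.le]
      have hcb2 : sb ^ 2 + cb ^ 2 = 1 := by rw [hsb, hcb]; linear_combination (4 * c ^ 2) * hsc
      have e1 : b ^ 2 = b ^ 2 * sb ^ 2 + b ^ 2 * cb ^ 2 := by
        linear_combination (-(b ^ 2)) * hcb2
      have e2 : n ^ 2 * sb ^ 2 = b ^ 2 * sb ^ 2 + x₀ ^ 2 * sb ^ 2 := by
        linear_combination (-(sb ^ 2)) * hbsq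
      have hkey : ε ^ 2 * sb ^ 2 < n ^ 2 * sb ^ 2 := by linarith
      have hsq2 : ε ^ 2 < n ^ 2 :=
        (mul_lt_mul_iff_left₀ (by positivity : (0:ℝ) < sb ^ 2)).mp hkey
      have hεn : ε < n := by nlinarith
      nlinarith [mul_pos hε0 hc]

set_option maxHeartbeats 1000000 in
/-- if `x = (x₁, x̄) ∈ 𝑇̃Ω_β(ε)` (i.e. `g_ε(x̄) < x₁` and `|x| < 1`),
then `|x| > ε sin β / √(2(1 - cos β))`. -/
theorem norm_lower_bound (N : ℕ) (hN : 2 ≤ N) (β : ℝ) (hβ : β ∈ Set.Ioo 0 π)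
    (ε : ℝ) (hε : ε ∈ Set.Ioo (0 : ℝ) 1)
    (g : ℝ → ℝ → ℝ)
    (hg : ∀ δ b : ℝ, g δ b =
      if b ≤ δ * Real.sin β then δ - b * Real.tan (β / 2)
      else b * (Real.cos β / Real.sin β))
    (x : EuclideanSpace ℝ (Fin N))
    (hx : g ε (Real.sqrt (‖x‖ ^ 2 - (x ⟨0, by omega⟩) ^ 2)) < x ⟨0, by omega⟩)
    (hx1 : ‖x‖ < 1) :
    ε * Real.sin β / Real.sqrt (2 * (1 - Real.cos β)) < ‖x‖ := by
  obtain ⟨hβ0, hβπ⟩ := hβ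
  obtain ⟨hε0, hε1⟩ := hε
  set x₀ : ℝ := x ⟨0, by omega⟩ with hx₀def
  have hnormsq : ‖x‖ ^ 2 = ∑ i, (x i) ^ 2 := by
    rw [EuclideanSpace.norm_eq, Real.sq_sqrt (by positivity)]
    simp [Real.norm_eq_abs, sq_abs]
  have hx0sq : x₀ ^ 2 ≤ ‖x‖ ^ 2 := by
    rw [hnormsq]
    exact Finset.single_le_sum (f := fun i => (x i) ^ 2)
      (fun i _ => sq_nonneg _) (Finset.mem_univ _)
  set b : ℝ := Real.sqrt (‖x‖ ^ 2 - x₀ ^ 2) with hbdef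
  have hb0 : 0 ≤ b := Real.sqrt_nonneg _
  have hbsq : b ^ 2 = ‖x‖ ^ 2 - x₀ ^ 2 := Real.sq_sqrt (by linarith)
  set s : ℝ := Real.sin (β / 2) with hsdef
  set c : ℝ := Real.cos (β / 2) with hcdef
  have hs : 0 < s := Real.sin_pos_of_pos_of_lt_pi (by linarith) (by linarith [Real.pi_pos])
  have hc : 0 < c := Real.cos_pos_of_mem_Ioo ⟨by linarith [Real.pi_pos], by linarith⟩
  have hsc : s ^ 2 + c ^ 2 = 1 := Real.sin_sq_add_cos_sq _
  have hsinβ : Real.sin β = 2 * s * c := by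
    rw [show β = 2 * (β / 2) by ring, Real.sin_two_mul]
  have hcosβ : Real.cos β = 2 * c ^ 2 - 1 := by
    rw [show β = 2 * (β / 2) by ring, Real.cos_two_mul]
  have hsinβ0 : 0 < Real.sin β := Real.sin_pos_of_pos_of_lt_pi hβ0 hβπ
  have hsqrt : Real.sqrt (2 * (1 - Real.cos β)) = 2 * s := by
    have h4 : 2 * (1 - Real.cos β) = (2 * s) ^ 2 := by
      rw [hcosβ]; nlinarith [hsc]
    rw [h4, Real.sqrt_sq (by positivity)]
  have hgoal : ε * Real.sin β / Real.sqrt (2 * (1 - Real.cos β)) = ε * c := by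
    rw [hsqrt, hsinβ]
    field_simp
  rw [hgoal]
  rw [hg] at hx
  have htan : Real.tan (β / 2) = s / c := Real.tan_eq_sin_div_cos _
  rw [htan] at hx
  exact norm_lower_bound_aux ε s c (Real.sin β) (Real.cos β) x₀ b ‖x‖
    hε0 hs hc hsc hsinβ hcosβ hsinβ0 hb0 hbsq (norm_nonneg x) hx
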